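/- Let 0 < α < 2. Then there exists a constant C < ∞ such that for all λ > 0 and all u > 0, |∫₀^∞ sin(us) s^{−α} e^{−λs} ds| ≤ C · u^{α−1}. -/

import Mathlib

open MeasureTheory Real Set Filter Topology

theorem smalltime_AuxEst10 (α : ℝ) (h0 : 0 < α) (h2 : α < 2) :
    ∃ C : ℝ, ∀ lam u : ℝ, 0 < lam → 0 < u →
      |∫ s in Ioi (0:ℝ), Real.sin (u * s) * s ^ (-α) * Real.exp (-(lam * s))| ≤ C * u ^ (α - 1) := by
  refine ⟨1/(2-α) + 3, fun lam u hlam hu => ?_⟩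
  set A : ℝ := u⁻¹ with hAdef
  have hA0 : 0 < A := inv_pos.2 hu
  set g : ℝ → ℝ := fun s => Real.sin (u * s) * s ^ (-α) * Real.exp (-(lam * s)) with hgdef
  -- key rpow arithmetic
  have hkey : (1/u) * A ^ (-α) = u ^ (α-1) := by
    rw [Real.rpow_sub hu, Real.rpow_one, hAdef, Real.inv_rpow hu.le, ← Real.rpow_neg hu.le,
      neg_neg]
    ring
  have hgcont : ContinuousOn g (Ioi 0) := by
    intro s hs
    have h1 : ContinuousAt (fun s : ℝ => s ^ (-α)) s :=
      Real.continuousAt_rpow_const s (-α) (Or.inl (ne_of_gt hs))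
    exact (((Real.continuous_sin.comp (continuous_const.mul continuous_id)).continuousAt.mul h1).mul
      (Real.continuous_exp.comp (continuous_const.mul continuous_id).neg).continuousAt).continuousWithinAt
  -- pointwise bound near zero
  have hbound1 : ∀ s : ℝ, 0 < s → |g s| ≤ u * s ^ (1-α) := by
    intro s hs0
    have e1 : |Real.sin (u*s)| ≤ u * s := by
      calc |Real.sin (u*s)| ≤ |u*s| := Real.abs_sin_le_abs
        _ = u * s := abs_of_pos (mul_pos hu hs0)
    have e2 : |s ^ (-α)| = s ^ (-α) := abs_of_nonneg (Real.rpow_nonneg hs0.le _)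
    have e3 : |Real.exp (-(lam*s))| ≤ 1 := by
      rw [abs_of_pos (Real.exp_pos _)]
      exact Real.exp_le_one_iff.2 (by nlinarith)
    have hsplit : s ^ (1-α) = s * s ^ (-α) := by
      rw [show (1:ℝ)-α = 1 + (-α) by ring, Real.rpow_add hs0, Real.rpow_one]
    calc |g s| = |Real.sin (u*s)| * |s ^ (-α)| * |Real.exp (-(lam*s))| := by
          simp [hgdef, abs_mul]
      _ ≤ (u*s) * (s ^ (-α)) * 1 := by
          rw [e2]
          exact mul_le_mul (mul_le_mul_of_nonneg_right e1 (Real.rpow_nonneg hs0.le _))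
            e3 (abs_nonneg _) (by positivity)
      _ = u * s ^ (1-α) := by rw [hsplit]; ring
  -- integrability on (0, A]
  have hbint : IntegrableOn (fun s : ℝ => u * s ^ (1-α)) (Ioc 0 A) :=
    ((intervalIntegral.intervalIntegrable_rpow' (by linarith : (-1:ℝ) < 1-α)).1).const_mul u
  have hint1 : IntegrableOn g (Ioc 0 A) := by
    refine hbint.mono' ((hgcont.mono Ioc_subset_Ioi_self).aestronglyMeasurable
      measurableSet_Ioc) ?_
    filter_upwards [ae_restrict_mem measurableSet_Ioc] with s hs
    simpa [Real.norm_eq_abs] using hbound1 s hs.1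
  -- bound on (0, A]
  have hIoc : |∫ s in Ioc (0:ℝ) A, g s| ≤ (1/(2-α)) * u ^ (α-1) := by
    have h1 : |∫ s in Ioc (0:ℝ) A, g s| ≤ ∫ s in Ioc (0:ℝ) A, u * s ^ (1-α) := by
      rw [← Real.norm_eq_abs]
      refine norm_integral_le_of_norm_le hbint ?_
      filter_upwards [ae_restrict_mem measurableSet_Ioc] with s hs
      simpa [Real.norm_eq_abs] using hbound1 s hs.1
    have h2 : ∫ s in Ioc (0:ℝ) A, u * s ^ (1-α) = u * (A ^ (2-α) / (2-α)) := by
      rw [← intervalIntegral.integral_of_le hA0.le, intervalIntegral.integral_const_mul,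
        integral_rpow (Or.inl (by linarith : (-1:ℝ) < 1-α))]
      rw [show (1:ℝ)-α+1 = 2-α by ring, Real.zero_rpow (by intro h; linarith [h] : (2:ℝ)-α ≠ 0)]
      ring
    have h3 : u * (A ^ (2-α) / (2-α)) = (1/(2-α)) * u ^ (α-1) := by
      have hA2 : A ^ (2-α) = u ^ (α-2) := by
        rw [hAdef, Real.inv_rpow hu.le, ← Real.rpow_neg hu.le, show -(2-α) = α-2 by ring]
      rw [hA2]
      have : u * u ^ (α-2) = u ^ (α-1) := by
        rw [show α - 1 = 1 + (α-2) by ring, Real.rpow_add hu, Real.rpow_one]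
      calc u * (u ^ (α-2) / (2-α)) = (u * u ^ (α-2)) / (2-α) := by ring
        _ = u ^ (α-1) / (2-α) := by rw [this]
        _ = (1/(2-α)) * u ^ (α-1) := by ring
    rw [h2, h3] at h1
    exact h1
  -- integration by parts on (A, ∞)
  set r : ℝ → ℝ := fun s => (-Real.cos (u*s)/u) *
    ((-α * s ^ (-α-1)) * Real.exp (-(lam*s)) + s ^ (-α) * (Real.exp (-(lam*s)) * -lam)) with hrdef
  set F : ℝ → ℝ := fun s => (-Real.cos (u*s)/u) * (s ^ (-α) * Real.exp (-(lam*s))) with hFdef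
  have hderiv : ∀ s ∈ Ioi (0:ℝ), HasDerivAt F (g s + r s) s := by
    intro s hs
    have hc : HasDerivAt (fun s : ℝ => u*s) u s := by
      simpa using (hasDerivAt_id s).const_mul u
    have h1 : HasDerivAt (fun s : ℝ => -Real.cos (u*s)/u) (Real.sin (u*s)) s := by
      have := (hc.cos).neg.div_const u
      exact this.congr_deriv (by rw [div_eq_iff hu.ne']; ring)
    have ha : HasDerivAt (fun s : ℝ => s ^ (-α)) (-α * s ^ (-α-1)) s := by
      have := Real.hasDerivAt_rpow_const (x := s) (p := -α) (Or.inl (ne_of_gt hs))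
      simpa [show -α - 1 = -α - 1 by ring, sub_eq_add_neg] using this
    have hb : HasDerivAt (fun s : ℝ => Real.exp (-(lam*s))) (Real.exp (-(lam*s)) * -lam) s := by
      have hd : HasDerivAt (fun s : ℝ => -(lam*s)) (-lam) s := by
        exact ((hasDerivAt_id s).const_mul lam).neg.congr_deriv (by ring)
      exact hd.exp
    have h2 := ha.mul hb
    have := h1.mul h2
    exact this.congr_deriv (by simp only [hgdef, hrdef, Pi.mul_apply]; ring)
  have htendF : Tendsto F atTop (𝓝 0) := by
    have t1 : Tendsto (fun s : ℝ => s ^ (-α)) atTop (𝓝 0) := tendsto_rpow_neg_atTop h0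
    have hlin : Tendsto (fun s : ℝ => lam * s) atTop atTop :=
      Filter.tendsto_id.const_mul_atTop hlam
    have t2 : Tendsto (fun s : ℝ => Real.exp (-(lam*s))) atTop (𝓝 0) :=
      Real.tendsto_exp_neg_atTop_nhds_zero.comp hlin
    have hb : Tendsto (fun s : ℝ => (1/u) * (s ^ (-α) * Real.exp (-(lam*s)))) atTop (𝓝 0) := by
      have := (t1.mul t2).const_mul (1/u)
      simpa using this
    apply squeeze_zero_norm' _ hb
    filter_upwards [eventually_ge_atTop (0:ℝ)] with s hs
    have e0 : |(-Real.cos (u*s))/u| ≤ 1/u := by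
      rw [abs_div, abs_neg, abs_of_pos hu]
      gcongr
      exact Real.abs_cos_le_one _
    have e1 : |s ^ (-α) * Real.exp (-(lam*s))| = s ^ (-α) * Real.exp (-(lam*s)) :=
      abs_of_nonneg (mul_nonneg (Real.rpow_nonneg hs _) (Real.exp_pos _).le)
    calc ‖F s‖ = |(-Real.cos (u*s))/u| * |s ^ (-α) * Real.exp (-(lam*s))| := by
          simp only [hFdef, Real.norm_eq_abs]
          rw [abs_mul]
      _ ≤ (1/u) * (s ^ (-α) * Real.exp (-(lam*s))) := by
          rw [e1]
          exact mul_le_mul_of_nonneg_right e0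
            (mul_nonneg (Real.rpow_nonneg hs _) (Real.exp_pos _).le)
  -- integrability of g on (A, ∞)
  have hexp_eq : ∀ s : ℝ, Real.exp (-lam * s) = Real.exp (-(lam * s)) := by
    intro s; rw [neg_mul]
  have hint2 : IntegrableOn g (Ioi A) := by
    have hbi : IntegrableOn (fun s : ℝ => A ^ (-α) * Real.exp (-lam * s)) (Ioi A) :=
      (exp_neg_integrableOn_Ioi A hlam).const_mul _
    refine hbi.mono' ((hgcont.mono (Ioi_subset_Ioi hA0.le)).aestronglyMeasurable
      measurableSet_Ioi) ?_
    filter_upwards [ae_restrict_mem measurableSet_Ioi] with s hs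
    have hs0 : 0 < s := hA0.trans hs
    have e1 : |Real.sin (u*s)| ≤ 1 := Real.abs_sin_le_one _
    have e2 : s ^ (-α) ≤ A ^ (-α) :=
      Real.rpow_le_rpow_of_nonpos hA0 (le_of_lt hs) (by linarith)
    calc ‖g s‖ = |Real.sin (u*s)| * (s ^ (-α)) * Real.exp (-(lam*s)) := by
          simp [hgdef, Real.norm_eq_abs, abs_mul, abs_of_nonneg (Real.rpow_nonneg hs0.le (-α)),
            abs_of_pos (Real.exp_pos _)]
      _ ≤ 1 * (A ^ (-α)) * Real.exp (-(lam*s)) := by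
          gcongr
      _ = A ^ (-α) * Real.exp (-lam * s) := by rw [hexp_eq]; ring
  -- dominating function for r
  set ρ : ℝ → ℝ := fun s => (1/u) * (α * s ^ (-α-1) + (lam * A ^ (-α)) * Real.exp (-lam * s))
    with hρdef
  have hρint : IntegrableOn ρ (Ioi A) := by
    refine (Integrable.add ?_ ?_).const_mul _
    · exact (integrableOn_Ioi_rpow_of_lt (by linarith : -α-1 < -1) hA0).const_mul α
    · exact (exp_neg_integrableOn_Ioi A hlam).const_mul _
  have hrbound : ∀ s ∈ Ioi A, |r s| ≤ ρ s := by
    intro s hs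
    have hs0 : 0 < s := hA0.trans hs
    have e0 : |(-Real.cos (u*s))/u| ≤ 1/u := by
      rw [abs_div, abs_neg, abs_of_pos hu]
      gcongr
      exact Real.abs_cos_le_one _
    have e2 : s ^ (-α) ≤ A ^ (-α) :=
      Real.rpow_le_rpow_of_nonpos hA0 (le_of_lt hs) (by linarith)
    have e3 : |(-α * s ^ (-α-1)) * Real.exp (-(lam*s))| ≤ α * s ^ (-α-1) := by
      rw [abs_mul, abs_mul, abs_neg, abs_of_pos h0, abs_of_nonneg (Real.rpow_nonneg hs0.le _),
        abs_of_pos (Real.exp_pos _)]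
      have : Real.exp (-(lam*s)) ≤ 1 := Real.exp_le_one_iff.2 (by nlinarith)
      nlinarith [Real.rpow_nonneg hs0.le (-α-1), mul_pos h0 (Real.rpow_pos_of_pos hs0 (-α-1))]
    have e4 : |s ^ (-α) * (Real.exp (-(lam*s)) * -lam)| ≤ (lam * A ^ (-α)) * Real.exp (-lam*s) := by
      rw [abs_mul, abs_mul, abs_neg, abs_of_pos hlam, abs_of_nonneg (Real.rpow_nonneg hs0.le _),
        abs_of_pos (Real.exp_pos _), hexp_eq]
      have h1 : s ^ (-α) * (Real.exp (-(lam*s)) * lam) ≤ A ^ (-α) * (Real.exp (-(lam*s)) * lam) := by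
        gcongr
      calc s ^ (-α) * (Real.exp (-(lam*s)) * lam) ≤ A ^ (-α) * (Real.exp (-(lam*s)) * lam) := h1
        _ = (lam * A ^ (-α)) * Real.exp (-(lam*s)) := by ring
    calc |r s| = |(-Real.cos (u*s))/u| *
          |(-α * s ^ (-α-1)) * Real.exp (-(lam*s)) + s ^ (-α) * (Real.exp (-(lam*s)) * -lam)| := by
          simp [hrdef, abs_mul]
      _ ≤ (1/u) * (α * s ^ (-α-1) + (lam * A ^ (-α)) * Real.exp (-lam * s)) := by
          refine mul_le_mul e0 ((abs_add_le _ _).trans (add_le_add e3 e4)) (abs_nonneg _) ?_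
          positivity
      _ = ρ s := rfl
  have hrcont : ContinuousOn r (Ioi A) := by
    intro s hs
    have hs0 : 0 < s := hA0.trans hs
    have h1 : ContinuousAt (fun s : ℝ => s ^ (-α)) s :=
      Real.continuousAt_rpow_const s (-α) (Or.inl (ne_of_gt hs0))
    have h1' : ContinuousAt (fun s : ℝ => s ^ (-α-1)) s :=
      Real.continuousAt_rpow_const s (-α-1) (Or.inl (ne_of_gt hs0))
    have hexp : ContinuousAt (fun s : ℝ => Real.exp (-(lam*s))) s :=
      (Real.continuous_exp.comp (continuous_const.mul continuous_id).neg).continuousAt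
    have hcos : ContinuousAt (fun s : ℝ => -Real.cos (u*s)/u) s :=
      ((Real.continuous_cos.comp (continuous_const.mul continuous_id)).neg.div_const u).continuousAt
    exact (hcos.mul (((h1'.const_smul (-α)).mul hexp).add
      (h1.mul (hexp.mul continuousAt_const)))).continuousWithinAt
  have hintr : IntegrableOn r (Ioi A) := by
    refine hρint.mono' (hrcont.aestronglyMeasurable measurableSet_Ioi) ?_
    filter_upwards [ae_restrict_mem measurableSet_Ioi] with s hs
    simpa [Real.norm_eq_abs] using hrbound s hs
  -- the integration by parts identity
  have hFcont : ContinuousWithinAt F (Ici A) A := by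
    have h1 : ContinuousAt (fun s : ℝ => s ^ (-α)) A :=
      Real.continuousAt_rpow_const A (-α) (Or.inl (ne_of_gt hA0))
    exact (((Real.continuous_cos.comp (continuous_const.mul continuous_id)).neg.div_const
      u).continuousAt.mul (h1.mul
      (Real.continuous_exp.comp (continuous_const.mul continuous_id).neg).continuousAt)).continuousWithinAt
  have hibp : ∫ s in Ioi A, (g s + r s) = 0 - F A :=
    integral_Ioi_of_hasDerivAt_of_tendsto hFcont
      (fun s hs => hderiv s (hA0.trans hs)) (by exact (hint2.add hintr)) htendF
  have hsplit2 : ∫ s in Ioi A, g s = -F A - ∫ s in Ioi A, r s := by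
    have hadd := integral_add hint2 hintr
    rw [hibp] at hadd
    linarith
  -- value of the exponential integral on (A, ∞)
  have hexpint : ∫ s in Ioi A, Real.exp (-lam * s) = Real.exp (-lam * A) / lam := by
    have hd : ∀ x ∈ Ici A, HasDerivAt (fun s : ℝ => -Real.exp (-lam*s)/lam)
        (Real.exp (-lam*x)) x := by
      intro x _
      have hc : HasDerivAt (fun s : ℝ => -lam*s) (-lam) x := by
        simpa using (hasDerivAt_id x).const_mul (-lam)
      have := (hc.exp).neg.div_const lam
      exact this.congr_deriv (by rw [div_eq_iff hlam.ne']; ring)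
    have ht : Tendsto (fun s : ℝ => -Real.exp (-lam*s)/lam) atTop (𝓝 0) := by
      have hlin : Tendsto (fun s : ℝ => lam * s) atTop atTop :=
        Filter.tendsto_id.const_mul_atTop hlam
      have h2 : Tendsto (fun s : ℝ => Real.exp (-(lam*s))) atTop (𝓝 0) :=
        Real.tendsto_exp_neg_atTop_nhds_zero.comp hlin
      have h2' : Tendsto (fun s : ℝ => Real.exp (-lam*s)) atTop (𝓝 0) := by
        simpa [neg_mul] using h2
      have := (h2'.neg).div_const lam
      simpa using this
    have := integral_Ioi_of_hasDerivAt_of_tendsto' hd (exp_neg_integrableOn_Ioi A hlam) ht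
    rw [this]
    ring
  -- value of the rpow integral
  have hrpowint : ∫ s in Ioi A, s ^ (-α-1) = A ^ (-α) / α := by
    have := integral_Ioi_rpow_of_lt (show -α-1 < -1 by linarith) hA0
    rw [show -α-1+1 = -α by ring] at this
    rw [this]
    field_simp
  -- ∫ ρ computed and bounded
  have hρval : ∫ s in Ioi A, ρ s ≤ 2 * u ^ (α-1) := by
    have h1 : ∫ s in Ioi A, ρ s = (1/u) * (α * (A ^ (-α) / α)
        + (lam * A ^ (-α)) * (Real.exp (-lam * A) / lam)) := by
      rw [hρdef]
      rw [MeasureTheory.integral_const_mul, integral_add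
        ((integrableOn_Ioi_rpow_of_lt (by linarith : -α-1 < -1) hA0).const_mul α)
        ((exp_neg_integrableOn_Ioi A hlam).const_mul _),
        MeasureTheory.integral_const_mul, MeasureTheory.integral_const_mul, hexpint, hrpowint]
    rw [h1]
    have e1 : α * (A ^ (-α) / α) = A ^ (-α) := by field_simp
    have e2 : (lam * A ^ (-α)) * (Real.exp (-lam * A) / lam) = A ^ (-α) * Real.exp (-lam * A) := by
      field_simp
    rw [e1, e2]
    have e3 : Real.exp (-lam * A) ≤ 1 := Real.exp_le_one_iff.2 (by nlinarith)
    have e4 : A ^ (-α) + A ^ (-α) * Real.exp (-lam * A) ≤ 2 * A ^ (-α) := by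
      nlinarith [Real.rpow_nonneg hA0.le (-α)]
    calc (1/u) * (A ^ (-α) + A ^ (-α) * Real.exp (-lam*A)) ≤ (1/u) * (2 * A ^ (-α)) := by
          gcongr
      _ = 2 * ((1/u) * A ^ (-α)) := by ring
      _ = 2 * u ^ (α-1) := by rw [hkey]
  -- bound on |F A|
  have hFA : |F A| ≤ u ^ (α-1) := by
    have e0 : |(-Real.cos (u*A))/u| ≤ 1/u := by
      rw [abs_div, abs_neg, abs_of_pos hu]
      gcongr
      exact Real.abs_cos_le_one _
    have e1 : |A ^ (-α) * Real.exp (-(lam*A))| ≤ A ^ (-α) := by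
      rw [abs_of_nonneg (mul_nonneg (Real.rpow_nonneg hA0.le _) (Real.exp_pos _).le)]
      have : Real.exp (-(lam*A)) ≤ 1 := Real.exp_le_one_iff.2 (by nlinarith)
      nlinarith [Real.rpow_nonneg hA0.le (-α)]
    calc |F A| = |(-Real.cos (u*A))/u| * |A ^ (-α) * Real.exp (-(lam*A))| := by
          simp [hFdef, abs_mul]
      _ ≤ (1/u) * A ^ (-α) := by
          refine mul_le_mul e0 e1 (abs_nonneg _) ?_
          positivity
      _ = u ^ (α-1) := hkey
  -- bound on tail
  have hIoi : |∫ s in Ioi A, g s| ≤ 3 * u ^ (α-1) := by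
    have h1 : |∫ s in Ioi A, r s| ≤ ∫ s in Ioi A, ρ s := by
      rw [← Real.norm_eq_abs]
      refine norm_integral_le_of_norm_le hρint ?_
      filter_upwards [ae_restrict_mem measurableSet_Ioi] with s hs
      simpa [Real.norm_eq_abs] using hrbound s hs
    rw [hsplit2]
    calc |-F A - ∫ s in Ioi A, r s| ≤ |F A| + |∫ s in Ioi A, r s| := by
          rw [sub_eq_add_neg]
          refine (abs_add_le _ _).trans ?_
          rw [abs_neg, abs_neg]
      _ ≤ u ^ (α-1) + 2 * u ^ (α-1) := add_le_add hFA (h1.trans hρval)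
      _ = 3 * u ^ (α-1) := by ring
  -- put together
  have hsplit : ∫ s in Ioi (0:ℝ), g s = (∫ s in Ioc (0:ℝ) A, g s) + ∫ s in Ioi A, g s := by
    rw [← Ioc_union_Ioi_eq_Ioi hA0.le]
    exact setIntegral_union (Ioc_disjoint_Ioi le_rfl) measurableSet_Ioi hint1 hint2
  rw [hsplit]
  calc |(∫ s in Ioc (0:ℝ) A, g s) + ∫ s in Ioi A, g s|
      ≤ |∫ s in Ioc (0:ℝ) A, g s| + |∫ s in Ioi A, g s| := abs_add_le _ _
    _ ≤ (1/(2-α)) * u ^ (α-1) + 3 * u ^ (α-1) := add_le_add hIoc hIoi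
    _ = (1/(2-α) + 3) * u ^ (α-1) := by ring
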